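/- Let V be a finite nonempty set, let a ∈ ℝ, and for each u ∈ V let L_u : ℝ → ℝ be differentiable. Assume that for every t ∈ ℝ and every u ∈ V with L_u(t) = max_{v∈V} L_v(t), the derivative satisfies L_u'(t) ≤ a. Then for all reals t₁ ≤ t₂, max_{v∈V} L_v(t₂) − max_{v∈V} L_v(t₁) ≤ a·(t₂ − t₁). -/

import Mathlib

open Set Filter Topology

/-- Envelope rate lemma (upper): if every node attaining the maximum clock
value runs at rate at most `a`, then the maximum clock value increases at
rate at most `a`. -/
theorem max_envelope_rate
    {V : Type*} [Fintype V] [Nonempty V]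
    (a : ℝ) (L : V → ℝ → ℝ)
    (hdiff : ∀ u, Differentiable ℝ (L u))
    (hmax : ∀ t : ℝ, ∀ u : V,
      L u t = Finset.univ.sup' Finset.univ_nonempty (fun v => L v t) →
      deriv (L u) t ≤ a) :
    ∀ t₁ t₂ : ℝ, t₁ ≤ t₂ →
      Finset.univ.sup' Finset.univ_nonempty (fun v => L v t₂) -
        Finset.univ.sup' Finset.univ_nonempty (fun v => L v t₁) ≤ a * (t₂ - t₁) := by
  intro t₁ t₂ h12
  set M : ℝ → ℝ := fun t => Finset.univ.sup' Finset.univ_nonempty (fun v => L v t) with hM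
  have hMc : Continuous M := by
    apply Continuous.finset_sup'_apply
    intro i _
    exact (hdiff i).continuous
  have key : M t₂ ≤ M t₁ + a * (t₂ - t₁) := by
    have := image_le_of_liminf_slope_right_le_deriv_boundary
      (f := M) (a := t₁) (b := t₂)
      (B := fun z => M t₁ + a * (z - t₁)) (B' := fun _ => a)
      hMc.continuousOn (by simp) (by fun_prop)
      (fun x _ => by
        simpa using (((hasDerivWithinAt_id x (Ici x)).sub_const t₁).const_mul a).const_add (M t₁))
      ?_ (right_mem_Icc.2 h12)
    · simpa using this
    · intro x _ r hr
      by_contra hcon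
      rw [not_frequently] at hcon
      have hev : ∀ᶠ z in 𝓝[>] x, r ≤ slope M x z := by
        filter_upwards [hcon] with z hz; linarith [not_lt.1 hz]
      -- some node attains the max frequently
      have hattain : ∀ z : ℝ, ∃ v : V, M z = L v z := by
        intro z
        obtain ⟨v, _, hv⟩ := Finset.exists_mem_eq_sup' (Finset.univ_nonempty (α := V))
          (fun v => L v z)
        exact ⟨v, hv⟩
      have : ∃ v : V, ∃ᶠ z in 𝓝[>] x, M z = L v z ∧ r ≤ slope M x z := by
        by_contra hno
        push_neg at hno
        have hall : ∀ᶠ z in 𝓝[>] x, ∀ v : V, ¬(M z = L v z ∧ r ≤ slope M x z) :=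
          eventually_all.2 fun v => by simpa [not_and, not_le, not_frequently] using hno v
        have : ∀ᶠ z in 𝓝[>] x, False := by
          filter_upwards [hall, hev] with z h1 h2
          obtain ⟨v, hv⟩ := hattain z
          exact h1 v ⟨hv, h2⟩
        exact (nhdsGT_neBot x).ne' (by simpa using this.frequently.exists |>.elim fun _ h => h.elim)
      obtain ⟨v, hv⟩ := this
      -- v attains the max at x
      have htM : Tendsto M (𝓝[>] x) (𝓝 (M x)) :=
        (hMc.tendsto x).mono_left nhdsWithin_le_nhds
      have htL : Tendsto (L v) (𝓝[>] x) (𝓝 (L v x)) :=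
        ((hdiff v).continuous.tendsto x).mono_left nhdsWithin_le_nhds
      have hvx : M x = L v x :=
        tendsto_nhds_unique_of_frequently_eq htM htL (hv.mono fun z hz => hz.1)
      have hda : deriv (L v) x ≤ a := hmax x v hvx.symm
      -- slope of L v tends to its derivative, which is < r
      have hslope : Tendsto (slope (L v) x) (𝓝[>] x) (𝓝 (deriv (L v) x)) :=
        ((hasDerivAt_iff_tendsto_slope.1 ((hdiff v) x).hasDerivAt).mono_left
          (nhdsWithin_mono x fun z hz => ne_of_gt hz))
      have hlt : ∀ᶠ z in 𝓝[>] x, slope (L v) x z < r :=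
        hslope.eventually_lt_const (lt_of_le_of_lt hda hr)
      have : ∃ᶠ z in 𝓝[>] x, False := by
        apply (hv.and_eventually hlt).mono
        rintro z ⟨⟨hzv, hzr⟩, hzs⟩
        have : slope M x z = slope (L v) x z := by
          simp [slope_def_field, hzv, hvx]
        linarith [this ▸ hzr]
      exact this.exists.elim fun _ h => h
  linarith
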